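/- arXiv:1510.03614 — 4 statements merged into one kernel-verified Lean document; each statement's English description precedes it below -/
import Mathlib

section
/- Let G be a connected graph and X a minimum vertex cover of G of size p ≥ 1. Then G has at most 2p - 2 edge separators (bridges) that are not incident to a pendant vertex outside of X. -/
open SimpleGraph

/-- A rainbow edge coloring: every pair of vertices is joined by a path
whose edge colors are pairwise distinct. -/
def IsRainbowEdgeColoring {V : Type*} (G : SimpleGraph V) (c : Sym2 V → ℕ) : Prop :=
  ∀ u v : V, ∃ p : G.Walk u v, p.IsPath ∧ (p.edges.map c).Nodup

/-- The rainbow connection number: least `k` admitting a rainbow edge coloring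
using colors `< k` on all edges. -/
noncomputable def rc {V : Type*} (G : SimpleGraph V) : ℕ :=
  sInf {k | ∃ c : Sym2 V → ℕ, (∀ e ∈ G.edgeSet, c e < k) ∧ IsRainbowEdgeColoring G c}

/-- Internal vertices of a walk. -/
def SimpleGraph.Walk.internals {V : Type*} {G : SimpleGraph V} {u v : V}
    (p : G.Walk u v) : List V := p.support.tail.dropLast

/-- A rainbow vertex coloring: every pair of vertices is joined by a path
whose internal vertices have pairwise distinct colors. -/
def IsRainbowVertexColoring {V : Type*} (G : SimpleGraph V) (c : V → ℕ) : Prop :=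
  ∀ u v : V, ∃ p : G.Walk u v, p.IsPath ∧ (p.internals.map c).Nodup

noncomputable def rvc {V : Type*} (G : SimpleGraph V) : ℕ :=
  sInf {k | ∃ c : V → ℕ, (∀ v, c v < k) ∧ IsRainbowVertexColoring G c}

/-- A strong rainbow vertex coloring: every pair of vertices is joined by a
shortest path whose internal vertices have pairwise distinct colors. -/
def IsStrongRainbowVertexColoring {V : Type*} (G : SimpleGraph V) (c : V → ℕ) : Prop :=
  ∀ u v : V, ∃ p : G.Walk u v, p.IsPath ∧ p.length = G.dist u v ∧ (p.internals.map c).Nodup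

noncomputable def srvc {V : Type*} (G : SimpleGraph V) : ℕ :=
  sInf {k | ∃ c : V → ℕ, (∀ v, c v < k) ∧ IsStrongRainbowVertexColoring G c}

/-- `X` is a vertex cover of `G`. -/
def IsVertexCover {V : Type*} (G : SimpleGraph V) (X : Set V) : Prop :=
  ∀ u v : V, G.Adj u v → u ∈ X ∨ v ∈ X

namespace BridgeAux

variable {V : Type*} (G : SimpleGraph V)

/-- The graph with all bridges removed. -/
def bfree : SimpleGraph V := G.deleteEdges {e | G.IsBridge e}

abbrev Comp := (bfree G).ConnectedComponent

def cmp (v : V) : Comp G := (bfree G).connectedComponentMk v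

variable {G}

lemma bfree_le_delete {e : Sym2 V} (he : G.IsBridge e) :
    bfree G ≤ G.deleteEdges {e} := by
  intro a b hab
  rw [bfree, deleteEdges_adj] at hab
  rw [deleteEdges_adj]
  refine ⟨hab.1, ?_⟩
  simp only [Set.mem_singleton_iff]
  rintro rfl
  exact hab.2 he

lemma reach_of_cmp_eq {e : Sym2 V} (he : G.IsBridge e) {a b : V}
    (h : cmp G a = cmp G b) : (G.deleteEdges {e}).Reachable a b :=
  (ConnectedComponent.eq.mp h).mono (bfree_le_delete he)

/-- Endpoints of a bridge lie in different components. -/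
lemma cmp_ne_of_bridge {a b : V} (he : G.IsBridge s(a, b)) :
    cmp G a ≠ cmp G b := by
  intro h
  have := reach_of_cmp_eq he h
  rw [isBridge_iff] at he
  exact he this

lemma cmp_eq_of_not_bridge {a b : V} (hab : G.Adj a b)
    (h : ¬ G.IsBridge s(a, b)) : cmp G a = cmp G b := by
  apply ConnectedComponent.sound
  exact SimpleGraph.Adj.reachable (by rw [bfree, deleteEdges_adj]; exact ⟨hab, h⟩)

/-- At most one bridge between any pair of components. -/
lemma bridge_unique (hG : G.Connected) {e₁ e₂ : Sym2 V} (h₁ : G.IsBridge e₁) (h₂ : G.IsBridge e₂)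
    (h : e₁.map (cmp G) = e₂.map (cmp G)) : e₁ = e₂ := by
  by_contra hne
  induction e₁ using Sym2.inductionOn with
  | hf a b =>
  induction e₂ using Sym2.inductionOn with
  | hf c d =>
  rw [Sym2.map_pair_eq, Sym2.map_pair_eq, Sym2.eq_iff] at h
  have key : ∀ c d : V, G.IsBridge s(c, d) → s(c, d) ≠ s(a, b) →
      cmp G a = cmp G c → cmp G b = cmp G d → False := by
    intro c d h₂ hne hac hbd
    have h1ab : G.IsBridge s(a, b) := h₁
    rw [isBridge_iff] at h1ab
    apply h1ab
    have r1 : (G.deleteEdges {s(a, b)}).Reachable a c := reach_of_cmp_eq h₁ hac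
    have r2 : (G.deleteEdges {s(a, b)}).Reachable d b := reach_of_cmp_eq h₁ hbd.symm
    have hadj : (G.deleteEdges {s(a, b)}).Adj c d := by
      rw [deleteEdges_adj]
      exact ⟨h₂.reachable_iff_adj.mp (hG.preconnected c d), by simpa using hne⟩
    exact r1.trans (hadj.reachable.trans r2)
  rcases h with ⟨hac, hbd⟩ | ⟨had, hbc⟩
  · exact key c d h₂ (fun h => hne h.symm) hac hbd
  · exact key d c (by rwa [Sym2.eq_swap] at h₂)
      (fun h => hne (by rw [← h, Sym2.eq_swap])) had hbc

variable (G)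

/-- The bridge tree. -/
def btree : SimpleGraph (Comp G) where
  Adj c d := c ≠ d ∧ ∃ a b : V, G.IsBridge s(a, b) ∧ cmp G a = c ∧ cmp G b = d
  symm := by
    constructor
    rintro c d ⟨hne, a, b, hb, ha, hbd⟩
    exact ⟨hne.symm, b, a, by rwa [Sym2.eq_swap] at hb, hbd, ha⟩
  loopless := by constructor; rintro c ⟨hne, -⟩; exact hne rfl

variable {G}

lemma btree_connected (hG : G.Connected) : (btree G).Connected := by
  have hreach : ∀ u v : V, (btree G).Reachable (cmp G u) (cmp G v) := by
    intro u v
    obtain ⟨w⟩ := hG.1 u v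
    induction w with
    | nil => exact Reachable.refl _
    | cons h q ih =>
      rename_i x y z
      by_cases hb : G.IsBridge s(x, y)
      · exact (Reachable.trans (Adj.reachable
          ⟨cmp_ne_of_bridge hb, x, y, hb, rfl, rfl⟩) ih)
      · rw [cmp_eq_of_not_bridge h hb]; exact ih
  have hne : Nonempty V := hG.nonempty
  rw [connected_iff]
  refine ⟨fun c d => ?_, ⟨cmp G (Classical.arbitrary V)⟩⟩
  obtain ⟨u, rfl⟩ := c.exists_rep
  obtain ⟨v, rfl⟩ := d.exists_rep
  exact hreach u v

lemma lift_walk (hG : G.Connected) {a0 b0 : V} (h0 : G.IsBridge s(a0, b0)) :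
    ∀ {c d : Comp G}
      (_ : ((btree G).deleteEdges {s(cmp G a0, cmp G b0)}).Walk c d)
      {u v : V}, cmp G u = c → cmp G v = d →
      (G.deleteEdges {s(a0, b0)}).Reachable u v := by
  intro c d w
  induction w with
  | nil => intro u v hu hv; exact reach_of_cmp_eq h0 (hu.trans hv.symm)
  | cons h q ih =>
    rename_i c c' d
    intro u v hu hv
    rw [deleteEdges_adj] at h
    obtain ⟨⟨hne, a, b, hb, ha, hb'⟩, hnot⟩ := h
    have hediff : s(a, b) ≠ s(a0, b0) := by
      intro heq
      apply hnot
      have : Sym2.map (cmp G) s(a, b) = Sym2.map (cmp G) s(a0, b0) := by rw [heq]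
      rw [Sym2.map_pair_eq, Sym2.map_pair_eq, ha, hb'] at this
      simpa using this
    have r1 : (G.deleteEdges {s(a0, b0)}).Reachable u a :=
      reach_of_cmp_eq h0 (hu.trans ha.symm)
    have hadj : (G.deleteEdges {s(a0, b0)}).Adj a b := by
      rw [deleteEdges_adj]
      exact ⟨hb.reachable_iff_adj.mp (hG.preconnected a b), by simpa using hediff⟩
    exact r1.trans (hadj.reachable.trans (ih hb' hv))

lemma btree_isAcyclic (hG : G.Connected) : (btree G).IsAcyclic := by
  rw [isAcyclic_iff_forall_adj_isBridge]
  intro c d h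
  obtain ⟨hne, a, b, hb, ha, hbd⟩ := h
  subst ha; subst hbd
  rw [isBridge_iff]
  rintro ⟨w⟩
  exact hb (lift_walk hG hb w rfl rfl)

lemma btree_isTree (hG : G.Connected) : (btree G).IsTree :=
  ⟨btree_connected hG, btree_isAcyclic hG⟩

lemma pendant_of_low_tdegree [Fintype V] [DecidableEq V] [DecidableRel G.Adj]
    [Fintype (Comp G)] [DecidableEq (Comp G)] [DecidableRel (btree G).Adj]
    {X : Set V} (hX : ∀ u v : V, G.Adj u v → u ∈ X ∨ v ∈ X)
    {a : V} (ha : a ∉ X) (hcompa : ∀ x ∈ X, cmp G x ≠ cmp G a)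
    (hdeg : (btree G).degree (cmp G a) ≤ 1)
    {b : V} (hab : G.Adj a b) : G.degree a = 1 := by
  have hbr : ∀ w, G.Adj a w → G.IsBridge s(a, w) := by
    intro w hw
    by_contra hnb
    have hcw : cmp G a = cmp G w := cmp_eq_of_not_bridge hw hnb
    rcases hX a w hw with h' | h'
    · exact ha h'
    · exact hcompa w h' hcw.symm
  have hle : G.degree a ≤ (btree G).degree (cmp G a) := by
    apply Finset.card_le_card_of_injOn (cmp G)
    · intro w hw
      rw [Finset.mem_coe, mem_neighborFinset] at hw
      rw [Finset.mem_coe, mem_neighborFinset]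
      exact ⟨(cmp_ne_of_bridge (hbr w hw)), a, w, hbr w hw, rfl, rfl⟩
    · intro w₁ hw₁ w₂ hw₂ hcc
      simp only [Finset.coe_sort_coe, Finset.mem_coe, mem_neighborFinset] at hw₁ hw₂
      by_contra hne
      have hb₁ : G.IsBridge s(a, w₁) := hbr w₁ hw₁
      have h1 := isBridge_iff.mp hb₁
      apply h1
      have hadj : (G.deleteEdges {s(a, w₁)}).Adj a w₂ := by
        rw [deleteEdges_adj]
        refine ⟨hw₂, ?_⟩
        simp only [Set.mem_singleton_iff, Sym2.congr_right]
        exact fun h => hne h.symm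
      exact hadj.reachable.trans (reach_of_cmp_eq hb₁ hcc.symm)
  have hpos : 0 < G.degree a := (G.degree_pos_iff_exists_adj a).mpr ⟨b, hab⟩
  omega

end BridgeAux

theorem bridges_not_incident_pendant_le' {V : Type*} [Fintype V] (G : SimpleGraph V)
    (hG : G.Connected) (X : Set V) (p : ℕ) (hp : 1 ≤ p)
    (hX : ∀ u v : V, G.Adj u v → u ∈ X ∨ v ∈ X) (hcard : X.ncard = p) :
    ({e : Sym2 V | G.IsBridge e ∧
        ¬ ∃ v ∈ e, v ∉ X ∧ (G.neighborSet v).ncard = 1} : Set (Sym2 V)).ncard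
      ≤ 2 * p - 2 := by
  classical
  have hVne : Nonempty V := hG.nonempty
  haveI : Finite (BridgeAux.Comp G) :=
    Finite.of_surjective (BridgeAux.cmp G) (fun q => q.exists_rep)
  haveI : Fintype (BridgeAux.Comp G) := Fintype.ofFinite _
  set T := BridgeAux.btree G with hTdef
  haveI : Fintype T.edgeSet := Fintype.ofFinite _
  have hT : T.IsTree := BridgeAux.btree_isTree hG
  have hm := hT.card_edgeFinset
  haveI : Fintype X := Fintype.ofFinite X
  set XF : Finset V := X.toFinset with hXF
  have hXFcard : XF.card = p := by rw [← hcard, Set.ncard_eq_toFinset_card']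
  set Q : Finset (BridgeAux.Comp G) := XF.image (BridgeAux.cmp G) with hQ
  have hQle : Q.card ≤ p := hXFcard ▸ Finset.card_image_le
  have hQne : 1 ≤ Q.card := by
    have hne : XF.Nonempty := by rw [← Finset.card_pos, hXFcard]; omega
    exact Finset.card_pos.mpr (hne.image _)
  set Z : Finset (BridgeAux.Comp G) := Qᶜ with hZ
  have hnotX : ∀ z ∈ Z, ∀ a : V, BridgeAux.cmp G a = z → a ∉ X := by
    intro z hz a hza hax
    rw [hZ, Finset.mem_compl] at hz
    exact hz (Finset.mem_image.mpr ⟨a, Set.mem_toFinset.mpr hax, hza⟩)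
  have hindep : ∀ z₁ ∈ Z, ∀ z₂ ∈ Z, ¬ T.Adj z₁ z₂ := by
    intro z₁ hz₁ z₂ hz₂ hadj
    obtain ⟨hne, a, b, hb, ha, hbd⟩ := hadj
    rcases hX a b (hb.reachable_iff_adj.mp (hG.preconnected a b)) with h | h
    · exact hnotX z₁ hz₁ a ha h
    · exact hnotX z₂ hz₂ b hbd h
  have hIdisj : ∀ z₁ ∈ Z, ∀ z₂ ∈ Z, z₁ ≠ z₂ →
      Disjoint (T.incidenceFinset z₁) (T.incidenceFinset z₂) := by
    intro z₁ hz₁ z₂ hz₂ hne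
    rw [Finset.disjoint_left]
    intro e he₁ he₂
    rw [mem_incidenceFinset] at he₁ he₂
    have heq : e = s(z₁, z₂) := (Sym2.mem_and_mem_iff hne).mp ⟨he₁.2, he₂.2⟩
    subst heq
    exact hindep z₁ hz₁ z₂ hz₂ ((SimpleGraph.mem_edgeSet T).mp he₁.1)
  have hbU : ∀ W : Finset (BridgeAux.Comp G), W ⊆ Z →
      (W.biUnion fun z => T.incidenceFinset z).card = ∑ z ∈ W, T.degree z := by
    intro W hW
    rw [Finset.card_biUnion (fun z₁ h₁ z₂ h₂ hne => hIdisj z₁ (hW h₁) z₂ (hW h₂) hne)]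
    exact Finset.sum_congr rfl fun z _ => T.card_incidenceFinset_eq_degree z
  have hIsub : ∀ z, T.incidenceFinset z ⊆ T.edgeFinset := by
    intro z e he
    rw [mem_incidenceFinset] at he
    rw [mem_edgeFinset]
    exact he.1
  have hdegpos : ∀ z ∈ Z, 1 ≤ T.degree z := by
    intro z hz
    obtain ⟨q0, hq0⟩ := Finset.card_pos.mp hQne
    have hzq : z ≠ q0 := by
      rintro rfl; rw [hZ, Finset.mem_compl] at hz; exact hz hq0
    obtain ⟨w⟩ := hT.isConnected.preconnected z q0
    cases w with
    | nil => exact absurd rfl hzq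
    | cons h q => exact (T.degree_pos_iff_exists_adj z).mpr ⟨_, h⟩
  set Z1 : Finset (BridgeAux.Comp G) := Z.filter (fun z => T.degree z ≤ 1) with hZ1
  set Z2 : Finset (BridgeAux.Comp G) := Z.filter (fun z => ¬ T.degree z ≤ 1) with hZ2
  set Bs := {e : Sym2 V | G.IsBridge e ∧
      ¬ ∃ v ∈ e, v ∉ X ∧ (G.neighborSet v).ncard = 1} with hBs
  haveI : Fintype Bs := Fintype.ofFinite _
  rw [Set.ncard_eq_toFinset_card']
  set BF := Bs.toFinset with hBF
  set BI := BF.image (Sym2.map (BridgeAux.cmp G)) with hBIdef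
  have hBIcard : BI.card = BF.card := Finset.card_image_of_injOn (by
    intro e₁ h₁ e₂ h₂ h
    rw [Finset.mem_coe, hBF, Set.mem_toFinset] at h₁ h₂
    exact BridgeAux.bridge_unique hG h₁.1 h₂.1 h)
  have hBmem : ∀ e ∈ BF, Sym2.map (BridgeAux.cmp G) e ∈ T.edgeFinset ∧
      ∀ z ∈ Z1, Sym2.map (BridgeAux.cmp G) e ∉ T.incidenceFinset z := by
    have endp : ∀ a b : V, G.IsBridge s(a, b) →
        (¬ ∃ v ∈ s(a, b), v ∉ X ∧ (G.neighborSet v).ncard = 1) →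
        ∀ z ∈ Z1, z = BridgeAux.cmp G a → False := by
      intro a b hab hnp z hz hza
      rw [hZ1, Finset.mem_filter] at hz
      obtain ⟨hzZ, hzdeg⟩ := hz
      have haX : a ∉ X := hnotX z hzZ a hza.symm
      have hdeg1 : G.degree a = 1 := by
        refine BridgeAux.pendant_of_low_tdegree hX haX ?_ ?_ (hab.reachable_iff_adj.mp (hG.preconnected a b))
        · intro x hx heq
          exact hnotX z hzZ x (heq.trans hza.symm) hx
        · rw [← hza]; exact hzdeg
      apply hnp
      refine ⟨a, Sym2.mem_mk_left a b, haX, ?_⟩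
      rw [Set.ncard_eq_toFinset_card', ← neighborFinset_def]
      exact hdeg1
    intro e he
    induction e using Sym2.inductionOn with
    | hf a b =>
      rw [hBF, Set.mem_toFinset, hBs] at he
      obtain ⟨hbr, hnp⟩ := he
      constructor
      · rw [Sym2.map_pair_eq, mem_edgeFinset, mem_edgeSet]
        exact ⟨BridgeAux.cmp_ne_of_bridge hbr, a, b, hbr, rfl, rfl⟩
      · intro z hz hmem
        rw [mem_incidenceFinset] at hmem
        have hzin := hmem.2
        rw [Sym2.map_pair_eq, Sym2.mem_iff] at hzin
        rcases hzin with rfl | rfl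
        · exact endp a b hbr hnp _ hz rfl
        · exact endp b a (Sym2.eq_swap ▸ hbr) (Sym2.eq_swap ▸ hnp) _ hz rfl
  have hBIsub : BI ⊆ T.edgeFinset := by
    intro e' he'
    obtain ⟨e, he, rfl⟩ := Finset.mem_image.mp he'
    exact (hBmem e he).1
  have hBIdisj : Disjoint BI (Z1.biUnion fun z => T.incidenceFinset z) := by
    rw [Finset.disjoint_left]
    intro e' he' hmem
    obtain ⟨e, he, rfl⟩ := Finset.mem_image.mp he'
    obtain ⟨z, hz, hzin⟩ := Finset.mem_biUnion.mp hmem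
    exact (hBmem e he).2 z hz hzin
  have hZ1sub' : Z1 ⊆ Z := Finset.filter_subset _ _
  have hZ2sub' : Z2 ⊆ Z := Finset.filter_subset _ _
  have hZ1bsub : (Z1.biUnion fun z => T.incidenceFinset z) ⊆ T.edgeFinset := by
    intro e he
    obtain ⟨z, _, hz⟩ := Finset.mem_biUnion.mp he
    exact hIsub z hz
  have hZ1deg : ∀ z ∈ Z1, T.degree z = 1 := by
    intro z hz
    rw [hZ1, Finset.mem_filter] at hz
    have := hdegpos z hz.1
    omega
  have hZ1bcard : (Z1.biUnion fun z => T.incidenceFinset z).card = Z1.card := by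
    rw [hbU Z1 hZ1sub', Finset.sum_congr rfl hZ1deg, Finset.sum_const, smul_eq_mul,
      mul_one]
  have h1 : BF.card + Z1.card ≤ T.edgeFinset.card := by
    rw [← hBIcard]
    calc BI.card + Z1.card
        = (BI ∪ Z1.biUnion fun z => T.incidenceFinset z).card := by
          rw [Finset.card_union_of_disjoint hBIdisj, hZ1bcard]
      _ ≤ T.edgeFinset.card :=
          Finset.card_le_card (Finset.union_subset hBIsub hZ1bsub)
  have h2 : Z1.card + 2 * Z2.card ≤ T.edgeFinset.card := by
    have hZbsub : (Z.biUnion fun z => T.incidenceFinset z) ⊆ T.edgeFinset := by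
      intro e he
      obtain ⟨z, _, hz⟩ := Finset.mem_biUnion.mp he
      exact hIsub z hz
    have hle : ∑ z ∈ Z, T.degree z ≤ T.edgeFinset.card := by
      rw [← hbU Z (subset_refl Z)]
      exact Finset.card_le_card hZbsub
    have hsplit : ∑ z ∈ Z1, T.degree z + ∑ z ∈ Z2, T.degree z = ∑ z ∈ Z, T.degree z :=
      Finset.sum_filter_add_sum_filter_not Z _ _
    have e1 : ∑ z ∈ Z1, T.degree z = Z1.card := by
      rw [Finset.sum_congr rfl hZ1deg, Finset.sum_const, smul_eq_mul, mul_one]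
    have e2 : Z2.card * 2 ≤ ∑ z ∈ Z2, T.degree z := by
      have := Finset.card_nsmul_le_sum Z2 (fun z => T.degree z) 2 (by
        intro z hz
        rw [hZ2, Finset.mem_filter] at hz
        show 2 ≤ T.degree z
        omega)
      simpa using this
    omega
  have h3 : Fintype.card (BridgeAux.Comp G) = Q.card + Z.card :=
    (Finset.card_add_card_compl Q).symm
  have h4 : Z.card = Z1.card + Z2.card :=
    (Finset.card_filter_add_card_filter_not (s := Z)
      (p := fun z => T.degree z ≤ 1)).symm
  omega

theorem bridges_not_incident_pendant_le {V : Type*} [Fintype V] (G : SimpleGraph V)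
    (hG : G.Connected) (X : Set V) (p : ℕ) (hp : 1 ≤ p)
    (hX : _root_.IsVertexCover G X) (hcard : X.ncard = p)
    (hmin : ∀ Y : Set V, _root_.IsVertexCover G Y → p ≤ Y.ncard) :
    ({e : Sym2 V | G.IsBridge e ∧
        ¬ ∃ v ∈ e, v ∉ X ∧ (G.neighborSet v).ncard = 1} : Set (Sym2 V)).ncard
      ≤ 2 * p - 2 :=
  bridges_not_incident_pendant_le' G hG X p hp hX hcard
end

section
/- Let G be a connected graph with a vertex cover X of size p, let β(p) = 2p - 2 + p·(p² + 2p·2^p), and let z be the number of edge separators of G. If z < β(p), then rc(G) ≤ β(p) + p² + 2^p · 2p. -/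
open SimpleGraph

lemma rc_le_of_semantic {V : Type*} [Fintype V] (G : SimpleGraph V) {C : Type*} (col : Sym2 V → C)
    (K : ℕ) (hK : (col '' G.edgeSet).ncard ≤ K)
    (hrb : ∀ u v : V, ∃ p : G.Walk u v, p.IsPath ∧ (p.edges.map col).Nodup) :
    rc G ≤ K := by
  classical
  set T : Set C := col '' G.edgeSet with hT
  have hTfin : T.Finite := (G.edgeSet.toFinite).image col
  haveI : Fintype ↥T := hTfin.fintype
  have hcard : Fintype.card ↥T ≤ Fintype.card (Fin K) := by
    rw [Fintype.card_fin, ← Nat.card_eq_fintype_card, Nat.card_coe_set_eq]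
    exact hK
  obtain ⟨f⟩ := Function.Embedding.nonempty_of_card_le hcard
  set g : C → ℕ := fun x => if h : x ∈ T then (f ⟨x, h⟩ : ℕ) else 0 with hg
  have hginj : ∀ x ∈ T, ∀ y ∈ T, g x = g y → x = y := by
    intro x hx y hy hxy
    rw [hg] at hxy
    simp only [dif_pos hx, dif_pos hy] at hxy
    have := f.injective (Fin.val_injective hxy)
    exact Subtype.ext_iff.mp this
  have : K ∈ {k | ∃ c : Sym2 V → ℕ, (∀ e ∈ G.edgeSet, c e < k) ∧ IsRainbowEdgeColoring G c} := by
    refine ⟨g ∘ col, ?_, ?_⟩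
    · intro e he
      have : col e ∈ T := Set.mem_image_of_mem _ he
      simp only [Function.comp_apply, hg, dif_pos this]
      exact (f ⟨col e, this⟩).isLt
    · intro u v
      obtain ⟨p, hp, hnd⟩ := hrb u v
      refine ⟨p, hp, ?_⟩
      have : p.edges.map (g ∘ col) = (p.edges.map col).map g := by
        rw [List.map_map]
      rw [this]
      refine List.Nodup.map_on ?_ hnd
      intro x hx y hy
      have hx' : x ∈ T := by
        obtain ⟨e, he, rfl⟩ := List.mem_map.mp hx
        exact Set.mem_image_of_mem _ (p.edges_subset_edgeSet he)
      have hy' : y ∈ T := by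
        obtain ⟨e, he, rfl⟩ := List.mem_map.mp hy
        exact Set.mem_image_of_mem _ (p.edges_subset_edgeSet he)
      exact hginj x hx' y hy'
  exact Nat.sInf_le this

lemma ncard_prod' {A B : Type*} (s : Set A) (t : Set B) :
    (s ×ˢ t).ncard = s.ncard * t.ncard := by
  rw [← Nat.card_coe_set_eq, ← Nat.card_coe_set_eq, ← Nat.card_coe_set_eq,
    Nat.card_congr (Equiv.Set.prod s t), Nat.card_prod]

lemma ncard_subsets_le {V : Type*} [Fintype V] (X : Set V) :
    {A : Set V | A ⊆ X}.ncard ≤ 2 ^ X.ncard := by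
  classical
  haveI : Fintype ↥X := X.toFinite.fintype
  have h := Set.ncard_le_ncard_of_injOn (s := {A : Set V | A ⊆ X})
      (fun A : Set V => (Subtype.val ⁻¹' A : Set ↥X))
      (fun A _ => Set.mem_univ _) ?_ (Set.finite_univ)
  · refine h.trans ?_
    rw [Set.ncard_univ, Nat.card_eq_fintype_card, Fintype.card_set]
    have : Fintype.card ↥X = X.ncard := by
      rw [← Nat.card_eq_fintype_card, Nat.card_coe_set_eq]
    rw [this]
  · intro A hA B hB hAB
    simp only at hAB
    ext v
    constructor
    · intro hv
      have hvX : v ∈ X := hA hv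
      have : (⟨v, hvX⟩ : ↥X) ∈ (Subtype.val ⁻¹' A : Set ↥X) := hv
      rw [hAB] at this
      exact this
    · intro hv
      have hvX : v ∈ X := hB hv
      have : (⟨v, hvX⟩ : ↥X) ∈ (Subtype.val ⁻¹' B : Set ↥X) := hv
      rw [← hAB] at this
      exact this

theorem rc_le_of_few_bridges' {V : Type*} [Fintype V] (G : SimpleGraph V)
    (hG : G.Connected) (X : Set V) (p z : ℕ)
    (hX : ∀ u v : V, G.Adj u v → u ∈ X ∨ v ∈ X) (hcard : X.ncard = p)
    (hz : ({e : Sym2 V | G.IsBridge e} : Set (Sym2 V)).ncard = z)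
    (hsmall : z < 2 * p - 2 + p * (p ^ 2 + 2 * p * 2 ^ p)) :
    rc G ≤ (2 * p - 2 + p * (p ^ 2 + 2 * p * 2 ^ p)) + p ^ 2 + 2 ^ p * (2 * p) := by
  classical
  have hne : Nonempty V := hG.nonempty
  set N : V → Set V := fun v => G.neighborSet v with hN
  have hNX : ∀ v, v ∉ X → N v ⊆ X := by
    intro v hv u hu
    exact (hX v u hu).resolve_left hv
  set rep : Set V → V := fun A => if h : ∃ w, w ∉ X ∧ N w = A then h.choose else Classical.arbitrary V
    with hrepdef
  have hrep : ∀ v, v ∉ X → (rep (N v) ∉ X ∧ N (rep (N v)) = N v) := by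
    intro v hv
    have h : ∃ w, w ∉ X ∧ N w = N v := ⟨v, hv, rfl⟩
    rw [hrepdef]
    simp only [dif_pos h]
    exact h.choose_spec
  set S : Set V := X ∪ rep '' {A : Set V | A ⊆ X} with hS
  have hXS : X ⊆ S := Set.subset_union_left
  have hrepS : ∀ v, v ∉ X → rep (N v) ∈ S := by
    intro v hv
    exact Or.inr ⟨N v, hNX v hv, rfl⟩
  -- walks inside S
  have key1 : ∀ (n : ℕ) (u v : V) (w : G.Walk u v), w.length ≤ n → u ∈ S → v ∈ S →
      ∃ w' : G.Walk u v, ∀ x ∈ w'.support, x ∈ S := by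
    intro n
    induction n with
    | zero =>
      intro u v w hw hu hv
      cases w with
      | nil => exact ⟨.nil, by simp [hu]⟩
      | cons h q => simp [SimpleGraph.Walk.length_cons] at hw
    | succ n ih =>
      intro u v w hw hu hv
      cases w with
      | nil => exact ⟨.nil, by simp [hu]⟩
      | @cons _ b _ h q =>
        by_cases hb : b ∈ S
        · obtain ⟨q', hq'⟩ := ih b v q (by simp [SimpleGraph.Walk.length_cons] at hw; omega) hb hv
          refine ⟨.cons h q', ?_⟩
          intro x hx
          rw [SimpleGraph.Walk.support_cons, List.mem_cons] at hx
          rcases hx with rfl | hx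
          · exact hu
          · exact hq' x hx
        · have hbX : b ∉ X := fun hh => hb (hXS hh)
          cases q with
          | nil => exact absurd hv hb
          | @cons _ c _ h2 q2 =>
            have hr := hrep b hbX
            have hrc : G.Adj (rep (N b)) c := by
              have hc : c ∈ N b := h2
              rw [← hr.2] at hc
              exact hc
            have hur : G.Adj u (rep (N b)) := by
              have hc : u ∈ N b := h.symm
              rw [← hr.2] at hc
              exact (hc : G.Adj (rep (N b)) u).symm
            obtain ⟨q', hq'⟩ := ih (rep (N b)) v (SimpleGraph.Walk.cons hrc q2)
              (by simp [SimpleGraph.Walk.length_cons] at hw ⊢; omega) (hrepS b hbX) hv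
            refine ⟨.cons hur q', ?_⟩
            intro x hx
            rw [SimpleGraph.Walk.support_cons, List.mem_cons] at hx
            rcases hx with rfl | hx
            · exact hu
            · exact hq' x hx
  have key2 : ∀ u v : V, u ∈ S → v ∈ S →
      ∃ w : G.Walk u v, w.IsPath ∧ ∀ x ∈ w.support, x ∈ S := by
    intro u v hu hv
    obtain ⟨w⟩ := hG.preconnected u v
    obtain ⟨w', hw'⟩ := key1 w.length u v w le_rfl hu hv
    exact ⟨w'.bypass, w'.bypass_isPath, fun x hx => hw' x (w'.support_bypass_subset hx)⟩
  -- the semantic coloring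
  set key : Sym2 V → Set V × Set V := Sym2.lift ⟨fun a b =>
      if a ∈ X ∧ b ∉ X then (N b, {a}) else if b ∈ X ∧ a ∉ X then (N a, {b}) else (∅, ∅), by
    intro a b
    by_cases h1 : a ∈ X <;> by_cases h2 : b ∈ X <;> simp [h1, h2]⟩ with hkeydef
  set col : Sym2 V → (Sym2 V ⊕ (Set V × Set V)) := fun e =>
    if (∀ a ∈ e, a ∈ S) ∨ G.IsBridge e then .inl e else .inr (key e) with hcoldef
  have hkey : ∀ a b : V, a ∉ X → b ∈ X → key s(a, b) = (N a, {b}) := by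
    intro a b ha hb
    rw [hkeydef, Sym2.lift_mk]
    simp [ha, hb]
  have hcol_spec : ∀ e : Sym2 V, (∀ a ∈ e, a ∈ S) → col e = .inl e := by
    intro e he
    rw [hcoldef]
    exact if_pos (Or.inl he)
  have hnonspec : ∀ a b : V, a ∉ S → ¬(∀ x ∈ s(a, b), x ∈ S) := by
    intro a b ha h
    exact ha (h a (Sym2.mem_mk_left a b))
  have hcol_nonspec : ∀ a b : V, a ∉ S → b ∈ X →
      col s(a, b) = .inl s(a, b) ∨ col s(a, b) = .inr (N a, {b}) := by
    intro a b ha hb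
    rw [hcoldef]
    by_cases hbr : G.IsBridge s(a, b)
    · exact Or.inl (if_pos (Or.inr hbr))
    · right
      simp only []
      rw [if_neg, hkey a b (fun h => ha (hXS h)) hb]
      rintro (h | h)
      · exact hnonspec a b ha h
      · exact hbr h
  -- edges of S-walks are special
  have hspecial_edges : ∀ {x y : V} (P : G.Walk x y), (∀ t ∈ P.support, t ∈ S) →
      ∀ e ∈ P.edges, (∀ a ∈ e, a ∈ S) := by
    intro x y P hPS e he
    induction e using Sym2.ind with
    | _ c d =>
      intro a ha
      rw [Sym2.mem_iff] at ha
      rcases ha with rfl | rfl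
      · exact hPS a (P.fst_mem_support_of_mem_edges he)
      · have he' : s(a, c) ∈ P.edges := by rwa [Sym2.eq_swap]
        exact hPS a (P.fst_mem_support_of_mem_edges he')
  have hmid : ∀ {x y : V} (P : G.Walk x y), P.IsPath → (∀ t ∈ P.support, t ∈ S) →
      (P.edges.map col).Nodup := by
    intro x y P hP hPS
    have h1 : P.edges.map col = P.edges.map Sum.inl := by
      apply List.map_congr_left
      intro e he
      exact hcol_spec e (hspecial_edges P hPS e he)
    rw [h1]
    exact (hP.edges_nodup).map Sum.inl_injective
  -- a nonspecial edge color differs from any special edge color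
  have hdist : ∀ (a b : V), a ∉ S → b ∈ X → ∀ e' : Sym2 V, (∀ t ∈ e', t ∈ S) →
      col s(a, b) ≠ col e' := by
    intro a b ha hb e' he' hcc
    rw [hcol_spec e' he'] at hcc
    rcases hcol_nonspec a b ha hb with h | h <;> rw [h] at hcc
    · rw [Sum.inl.injEq] at hcc
      exact hnonspec a b ha (hcc ▸ he')
    · exact Sum.inr_ne_inl hcc
  have hnbr : ∀ a b : V, a ≠ b → ∃ x, G.Adj a x := by
    intro a b hab
    obtain ⟨w⟩ := hG.preconnected a b
    cases w with
    | nil => exact absurd rfl hab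
    | cons h q => exact ⟨_, h⟩
  -- attach one non-special endpoint
  have attach : ∀ u v : V, u ∉ S → v ∈ S → u ≠ v →
      ∃ p : G.Walk u v, p.IsPath ∧ (p.edges.map col).Nodup := by
    intro u v hu hv huv
    have huX : u ∉ X := fun h => hu (hXS h)
    obtain ⟨x, hux⟩ := hnbr u v huv
    have hxX : x ∈ X := (hX u x hux).resolve_left huX
    by_cases hxv : x = v
    · subst hxv
      refine ⟨.cons hux .nil, ?_, ?_⟩
      · rw [SimpleGraph.Walk.isPath_def]
        simp [hux.ne]
      · simp
    · obtain ⟨P, hP, hPS⟩ := key2 x v (hXS hxX) hv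
      refine ⟨.cons hux P, hP.cons (fun hm => hu (hPS u hm)), ?_⟩
      rw [SimpleGraph.Walk.edges_cons, List.map_cons]
      refine List.nodup_cons.mpr ⟨?_, hmid P hP hPS⟩
      intro hmem
      obtain ⟨e, he, heq⟩ := List.mem_map.mp hmem
      exact hdist u x hu hxX e (hspecial_edges P hPS e he) heq.symm
  -- both endpoints non-special
  have L3 : ∀ u v x x' : V, u ∉ S → v ∉ S → u ≠ v → G.Adj u x → G.Adj v x' →
      (N u, ({x} : Set V)) ≠ (N v, ({x'} : Set V)) →
      ∃ p : G.Walk u v, p.IsPath ∧ (p.edges.map col).Nodup := by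
    intro u v x x' hu hv huv hux hvx' hne2
    have huX : u ∉ X := fun h => hu (hXS h)
    have hvX : v ∉ X := fun h => hv (hXS h)
    have hxX : x ∈ X := (hX u x hux).resolve_left huX
    have hx'X : x' ∈ X := (hX v x' hvx').resolve_left hvX
    have hcc : col s(u, x) ≠ col s(v, x') := by
      rcases hcol_nonspec u x hu hxX with h1 | h1 <;>
        rcases hcol_nonspec v x' hv hx'X with h2 | h2 <;> rw [h1, h2]
      · intro hcc
        rw [Sum.inl.injEq, Sym2.eq_iff] at hcc
        rcases hcc with ⟨rfl, rfl⟩ | ⟨rfl, rfl⟩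
        · exact huv rfl
        · exact huX hx'X
      · exact fun hcc => Sum.inl_ne_inr hcc
      · exact fun hcc => Sum.inr_ne_inl hcc
      · intro hcc
        rw [Sum.inr.injEq] at hcc
        exact hne2 hcc
    by_cases hxx' : x = x'
    · subst hxx'
      refine ⟨.cons hux (.cons hvx'.symm .nil), ?_, ?_⟩
      · rw [SimpleGraph.Walk.isPath_def]
        simp only [SimpleGraph.Walk.support_cons, SimpleGraph.Walk.support_nil]
        rw [List.nodup_cons, List.nodup_cons]
        refine ⟨?_, ?_, List.nodup_singleton _⟩
        · intro h
          rcases List.mem_cons.mp h with rfl | h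
          · exact hux.ne rfl
          · rw [List.mem_singleton] at h
            exact huv h
        · rw [List.mem_singleton]
          exact fun h => hvx'.ne h.symm
      · simp only [SimpleGraph.Walk.edges_cons, SimpleGraph.Walk.edges_nil, List.map_cons,
          List.map_nil]
        rw [List.nodup_cons]
        refine ⟨?_, List.nodup_singleton _⟩
        rw [List.mem_singleton, show s(x, v) = s(v, x) from Sym2.eq_swap]
        exact hcc
    · obtain ⟨P, hP, hPS⟩ := key2 x x' (hXS hxX) (hXS hx'X)
      refine ⟨.cons hux (P.concat hvx'.symm), ?_, ?_⟩
      · rw [SimpleGraph.Walk.isPath_def, SimpleGraph.Walk.support_cons,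
          SimpleGraph.Walk.support_concat, List.nodup_cons]
        constructor
        · intro hm
          rcases List.mem_append.mp hm with hm | hm
          · exact hu (hPS u hm)
          · rw [List.mem_singleton] at hm
            exact huv hm
        · rw [List.nodup_append]
          refine ⟨(SimpleGraph.Walk.isPath_def _).mp hP, List.nodup_singleton _, ?_⟩
          intro a ha b hb hab
          rw [List.mem_singleton] at hb
          subst hb
          exact hv (hab ▸ hPS a ha)
      · rw [SimpleGraph.Walk.edges_cons, SimpleGraph.Walk.edges_concat, List.concat_eq_append,
          List.map_cons, List.map_append, List.nodup_cons]
        constructor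
        · intro hm
          rcases List.mem_append.mp hm with hm | hm
          · obtain ⟨e, he, heq⟩ := List.mem_map.mp hm
            exact hdist u x hu hxX e (hspecial_edges P hPS e he) heq.symm
          · simp only [List.map_cons, List.map_nil, List.mem_singleton] at hm
            rw [show s(x', v) = s(v, x') from Sym2.eq_swap] at hm
            exact hcc hm
        · rw [List.nodup_append]
          refine ⟨hmid P hP hPS, by simp, ?_⟩
          intro a ha b hb hab
          simp only [List.map_cons, List.map_nil, List.mem_singleton] at hb
          subst hb
          subst hab
          obtain ⟨e, he, heq⟩ := List.mem_map.mp ha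
          rw [show s(x', v) = s(v, x') from Sym2.eq_swap] at heq
          exact hdist v x' hv hx'X e (hspecial_edges P hPS e he) heq.symm
  have hrainbow : ∀ u v : V, ∃ p : G.Walk u v, p.IsPath ∧ (p.edges.map col).Nodup := by
    intro u v
    by_cases huv : u = v
    · subst huv
      exact ⟨.nil, by simp, by simp⟩
    by_cases hu : u ∈ S <;> by_cases hv : v ∈ S
    · obtain ⟨P, hP, hPS⟩ := key2 u v hu hv
      exact ⟨P, hP, hmid P hP hPS⟩
    · obtain ⟨q, hq, hqn⟩ := attach v u hv hu (Ne.symm huv)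
      refine ⟨q.reverse, hq.reverse, ?_⟩
      rw [SimpleGraph.Walk.edges_reverse, List.map_reverse, List.nodup_reverse]
      exact hqn
    · exact attach u v hu hv huv
    · have huX : u ∉ X := fun h => hu (hXS h)
      have hvX : v ∉ X := fun h => hv (hXS h)
      obtain ⟨x, hux⟩ := hnbr u v huv
      have hxX : x ∈ X := (hX u x hux).resolve_left huX
      by_cases hNuv : N u = N v
      · by_cases h2 : ∃ y ∈ N u, y ≠ x
        · obtain ⟨y, hy, hyx⟩ := h2
          have hvy : G.Adj v y := by
            have : y ∈ N v := hNuv ▸ hy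
            exact this
          apply L3 u v x y hu hv huv hux hvy
          intro hcc
          rw [Prod.mk.injEq] at hcc
          have := hcc.2
          rw [Set.singleton_eq_singleton_iff] at this
          exact hyx this.symm
        · push_neg at h2
          have h2' : ∀ y ∈ N v, y = x := by
            rw [← hNuv]
            exact h2
          have hvx : G.Adj v x := by
            have : x ∈ N v := hNuv ▸ (hux : x ∈ N u)
            exact this
          have hbr1 : G.IsBridge s(u, x) := by
            rw [SimpleGraph.isBridge_iff_adj_and_forall_walk_mem_edges]
            refine fun w => ?_
            cases w with
            | nil => exact absurd rfl hux.ne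
            | @cons _ b _ h q =>
              have hb : b = x := h2 b h
              subst hb
              rw [SimpleGraph.Walk.edges_cons]
              exact List.mem_cons_self
          have hbr2 : G.IsBridge s(v, x) := by
            rw [SimpleGraph.isBridge_iff_adj_and_forall_walk_mem_edges]
            refine fun w => ?_
            cases w with
            | nil => exact absurd rfl hvx.ne
            | @cons _ b _ h q =>
              have hb : b = x := h2' b h
              subst hb
              rw [SimpleGraph.Walk.edges_cons]
              exact List.mem_cons_self
          refine ⟨.cons hux (.cons hvx.symm .nil), ?_, ?_⟩
          · rw [SimpleGraph.Walk.isPath_def]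
            simp only [SimpleGraph.Walk.support_cons, SimpleGraph.Walk.support_nil]
            rw [List.nodup_cons, List.nodup_cons]
            refine ⟨?_, ?_, List.nodup_singleton _⟩
            · intro h
              rcases List.mem_cons.mp h with rfl | h
              · exact hux.ne rfl
              · rw [List.mem_singleton] at h
                exact huv h
            · rw [List.mem_singleton]
              exact fun h => hvx.ne h.symm
          · simp only [SimpleGraph.Walk.edges_cons, SimpleGraph.Walk.edges_nil, List.map_cons,
              List.map_nil]
            rw [List.nodup_cons]
            refine ⟨?_, List.nodup_singleton _⟩
            rw [List.mem_singleton]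
            have e1 : col s(u, x) = Sum.inl s(u, x) := by
              rw [hcoldef]
              exact if_pos (Or.inr hbr1)
            have e2 : col s(x, v) = Sum.inl s(v, x) := by
              rw [show s(x, v) = s(v, x) from Sym2.eq_swap, hcoldef]
              exact if_pos (Or.inr hbr2)
            rw [e1, e2]
            intro hcc
            rw [Sum.inl.injEq, Sym2.eq_iff] at hcc
            rcases hcc with ⟨h1, -⟩ | ⟨h1, -⟩
            · exact huv h1
            · exact hux.ne h1
      · obtain ⟨x', hvx'⟩ := hnbr v u (Ne.symm huv)
        apply L3 u v x x' hu hv huv hux hvx'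
        intro hcc
        rw [Prod.mk.injEq] at hcc
        exact hNuv hcc.1
  -- counting the colors
  set SE : Set (Sym2 V) := {e ∈ G.edgeSet | ∀ a ∈ e, a ∈ S} with hSE
  set BR : Set (Sym2 V) := {e : Sym2 V | G.IsBridge e} with hBR
  set PW : Set (Set V) := {A : Set V | A ⊆ X} with hPW
  set SG : Set (Set V) := (fun x : V => ({x} : Set V)) '' X with hSG
  have hsub : col '' G.edgeSet ⊆ (Sum.inl '' (SE ∪ BR)) ∪ (Sum.inr '' (PW ×ˢ SG)) := by
    rintro c ⟨e, he, rfl⟩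
    induction e using Sym2.ind with
    | _ a b =>
      have hab : G.Adj a b := he
      by_cases hsp : (∀ t ∈ s(a, b), t ∈ S) ∨ G.IsBridge s(a, b)
      · left
        have hc : col s(a, b) = Sum.inl s(a, b) := by
          rw [hcoldef]
          exact if_pos hsp
        refine ⟨s(a, b), ?_, hc.symm⟩
        rcases hsp with h | h
        · exact Or.inl ⟨he, h⟩
        · exact Or.inr h
      · right
        rw [not_or] at hsp
        obtain ⟨hns, hnb⟩ := hsp
        have hc : col s(a, b) = Sum.inr (key s(a, b)) := by
          rw [hcoldef]
          exact if_neg (by rintro (h | h); exacts [hns h, hnb h])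
        by_cases haX : a ∈ X
        · have hbX : b ∉ X := by
            intro hbX
            exact hns (by
              intro t ht
              rw [Sym2.mem_iff] at ht
              rcases ht with rfl | rfl
              · exact hXS haX
              · exact hXS hbX)
          have hk : key s(a, b) = (N b, {a}) := by
            rw [show s(a, b) = s(b, a) from Sym2.eq_swap]
            exact hkey b a hbX haX
          refine ⟨(N b, {a}), ⟨hNX b hbX, ⟨a, haX, rfl⟩⟩, ?_⟩
          rw [hc, hk]
        · have hbX : b ∈ X := (hX a b hab).resolve_left haX
          have hk : key s(a, b) = (N a, {b}) := hkey a b haX hbX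
          refine ⟨(N a, {b}), ⟨hNX a haX, ⟨b, hbX, rfl⟩⟩, ?_⟩
          rw [hc, hk]
  have hScard : S.ncard ≤ p + 2 ^ p := by
    calc S.ncard ≤ X.ncard + (rep '' {A : Set V | A ⊆ X}).ncard := Set.ncard_union_le _ _
      _ ≤ p + 2 ^ p := by
          rw [hcard]
          refine Nat.add_le_add_left ?_ _
          calc (rep '' {A : Set V | A ⊆ X}).ncard ≤ {A : Set V | A ⊆ X}.ncard :=
                Set.ncard_image_le (Set.toFinite _)
            _ ≤ 2 ^ X.ncard := ncard_subsets_le X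
            _ = 2 ^ p := by rw [hcard]
  have hSEcard : SE.ncard ≤ p * (p + 2 ^ p) := by
    have hsub2 : SE ⊆ (fun q : V × V => s(q.1, q.2)) '' (X ×ˢ S) := by
      rintro e ⟨he, hsp⟩
      induction e using Sym2.ind with
      | _ a b =>
        have hab : G.Adj a b := he
        rcases hX a b hab with haX | hbX
        · exact ⟨(a, b), ⟨haX, hsp b (Sym2.mem_mk_right a b)⟩, rfl⟩
        · exact ⟨(b, a), ⟨hbX, hsp a (Sym2.mem_mk_left a b)⟩, Sym2.eq_swap⟩
    calc SE.ncard ≤ ((fun q : V × V => s(q.1, q.2)) '' (X ×ˢ S)).ncard :=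
          Set.ncard_le_ncard hsub2 (Set.toFinite _)
      _ ≤ (X ×ˢ S).ncard := Set.ncard_image_le (Set.toFinite _)
      _ = X.ncard * S.ncard := ncard_prod' _ _
      _ ≤ p * (p + 2 ^ p) := by
          rw [hcard]
          exact Nat.mul_le_mul_left _ hScard
  have hKcard : (col '' G.edgeSet).ncard ≤ p * (p + 2 ^ p) + z + 2 ^ p * p := by
    calc (col '' G.edgeSet).ncard
        ≤ ((Sum.inl '' (SE ∪ BR)) ∪ (Sum.inr '' (PW ×ˢ SG)) :
            Set (Sym2 V ⊕ Set V × Set V)).ncard :=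
          Set.ncard_le_ncard hsub (Set.toFinite _)
      _ ≤ (Sum.inl '' (SE ∪ BR)).ncard + (Sum.inr '' (PW ×ˢ SG)).ncard :=
          Set.ncard_union_le _ _
      _ = (SE ∪ BR).ncard + (PW ×ˢ SG).ncard := by
          rw [Set.ncard_image_of_injective _ Sum.inl_injective,
            Set.ncard_image_of_injective _ Sum.inr_injective]
      _ ≤ (SE.ncard + BR.ncard) + PW.ncard * SG.ncard := by
          refine Nat.add_le_add (Set.ncard_union_le _ _) ?_
          rw [ncard_prod' _ _]
      _ ≤ p * (p + 2 ^ p) + z + 2 ^ p * p := by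
          refine Nat.add_le_add (Nat.add_le_add hSEcard (le_of_eq hz)) ?_
          refine Nat.mul_le_mul ?_ ?_
          · calc PW.ncard ≤ 2 ^ X.ncard := ncard_subsets_le X
              _ = 2 ^ p := by rw [hcard]
          · calc SG.ncard ≤ X.ncard := Set.ncard_image_le (Set.toFinite _)
              _ = p := hcard
  refine le_trans (rc_le_of_semantic G col _ hKcard hrainbow) ?_
  have heq : p * (p + 2 ^ p) + z + 2 ^ p * p = z + (p ^ 2 + 2 ^ p * (2 * p)) := by ring
  rw [heq]
  have hgoal : z + (p ^ 2 + 2 ^ p * (2 * p)) ≤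
      (2 * p - 2 + p * (p ^ 2 + 2 * p * 2 ^ p)) + p ^ 2 + 2 ^ p * (2 * p) := by
    generalize (2 * p - 2 + p * (p ^ 2 + 2 * p * 2 ^ p)) = B at hsmall ⊢
    generalize (p ^ 2 : ℕ) = c
    generalize (2 ^ p * (2 * p) : ℕ) = d
    omega
  exact hgoal

theorem rc_le_of_few_bridges {V : Type*} [Fintype V] (G : SimpleGraph V)
    (hG : G.Connected) (X : Set V) (p z : ℕ)
    (hX : _root_.IsVertexCover G X) (hcard : X.ncard = p)
    (hz : ({e : Sym2 V | G.IsBridge e} : Set (Sym2 V)).ncard = z)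
    (hsmall : z < 2 * p - 2 + p * (p ^ 2 + 2 * p * 2 ^ p)) :
    rc G ≤ (2 * p - 2 + p * (p ^ 2 + 2 * p * 2 ^ p)) + p ^ 2 + 2 ^ p * (2 * p) := by
  exact rc_le_of_few_bridges' G hG X p z hX hcard hz hsmall
end

section
/- If a connected graph G on n vertices has a spanning tree with at least k leaves (vertices of degree 1 in the tree), then rvc(G) ≤ n - k + 1; in particular, rvc(G) ≤ n - k if k ≥ 1 and n - k ≥ 1. -/
open SimpleGraph

lemma internals_two_nbrs {V : Type*} {T : SimpleGraph V} {u v : V} (p : T.Walk u v)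
    (hp : p.IsPath) : ∀ w ∈ p.support.tail.dropLast, ∃ a b, a ≠ b ∧ T.Adj w a ∧ T.Adj w b := by
  induction p with
  | nil => simp [SimpleGraph.Walk.support_nil]
  | @cons u x v h q ih =>
    rw [SimpleGraph.Walk.cons_isPath_iff] at hp
    cases q with
    | nil => simp [SimpleGraph.Walk.support_nil]
    | @cons x y v h' r =>
      intro w hw
      rw [SimpleGraph.Walk.support_cons] at hw
      rw [List.tail_cons] at hw
      rw [SimpleGraph.Walk.support_cons, List.dropLast_cons_of_ne_nil (by simp [SimpleGraph.Walk.support_ne_nil])] at hw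
      rcases List.mem_cons.mp hw with rfl | hw'
      · refine ⟨u, y, ?_, h.symm, h'⟩
        intro he; exact hp.2 (by rw [he, SimpleGraph.Walk.support_cons]; exact List.mem_cons_of_mem _ r.start_mem_support)
      · exact ih hp.1 w (by rw [SimpleGraph.Walk.support_cons, List.tail_cons]; exact hw')

lemma rvc_le_max {V : Type*} [Fintype V] (G : SimpleGraph V)
    (hG : G.Connected) (T : SimpleGraph V) (hTG : T ≤ G) (hT : T.IsTree) (k : ℕ)
    (hk : k ≤ ({v : V | (T.neighborSet v).ncard = 1} : Set V).ncard) :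
    rvc G ≤ max (Fintype.card V - k) 1 := by
  classical
  set S : Finset V := Finset.univ.filter (fun v => (T.neighborSet v).ncard ≠ 1) with hS
  have hScard : S.card ≤ Fintype.card V - k := by
    have h1 : (Finset.univ.filter (fun v => (T.neighborSet v).ncard = 1)).card + S.card
        = Fintype.card V := by
      rw [hS]; exact Finset.card_filter_add_card_filter_not _
    have h2 : k ≤ (Finset.univ.filter (fun v => (T.neighborSet v).ncard = 1)).card := by
      refine le_trans hk ?_
      rw [← Set.ncard_coe_finset]
      apply le_of_eq
      congr 1
      ext v; simp
    omega
  let e := S.equivFin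
  set c : V → ℕ := fun v => if h : v ∈ S then (e ⟨v, h⟩ : ℕ) else 0 with hc
  have hmem : (max (Fintype.card V - k) 1) ∈
      {k | ∃ c : V → ℕ, (∀ v, c v < k) ∧ IsRainbowVertexColoring G c} := by
    refine ⟨c, ?_, ?_⟩
    · intro v
      by_cases h : v ∈ S
      · have : c v < S.card := by rw [hc]; simp only [dif_pos h]; exact (e ⟨v, h⟩).isLt
        exact lt_of_lt_of_le this (le_trans hScard (le_max_left _ _))
      · rw [hc]; simp only [dif_neg h]
        exact lt_of_lt_of_le one_pos (le_max_right _ _)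
    · intro u v
      obtain ⟨q0⟩ := hT.isConnected.preconnected u v
      set q : T.Walk u v := q0.toPath.1 with hq
      have hqp : q.IsPath := q0.toPath.2
      have hedges : ∀ e ∈ q.edges, e ∈ G.edgeSet := fun e he =>
        SimpleGraph.edgeSet_mono hTG (q.edges_subset_edgeSet he)
      refine ⟨q.transfer G hedges, hqp.transfer hedges, ?_⟩
      have hsupp : (q.transfer G hedges).internals = q.internals := by
        unfold SimpleGraph.Walk.internals
        rw [SimpleGraph.Walk.support_transfer]
      rw [hsupp]
      have hnd : q.internals.Nodup :=
        ((List.dropLast_sublist _).trans (List.tail_sublist _)).nodup hqp.support_nodup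
      refine List.Nodup.map_on ?_ hnd
      intro x hx y hy hxy
      have memS : ∀ w, w ∈ q.internals → w ∈ S := by
        intro w hw
        obtain ⟨a, b, hab, ha, hb⟩ := internals_two_nbrs q hqp w hw
        rw [hS]; simp only [Finset.mem_filter, Finset.mem_univ, true_and]
        intro h1
        obtain ⟨z, hz⟩ := Set.ncard_eq_one.mp h1
        have ha' : a ∈ ({z} : Set V) := hz ▸ (ha : a ∈ T.neighborSet w)
        have hb' : b ∈ ({z} : Set V) := hz ▸ (hb : b ∈ T.neighborSet w)
        simp only [Set.mem_singleton_iff] at ha' hb'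
        exact hab (ha'.trans hb'.symm)
      have hxS : x ∈ S := memS x hx
      have hyS : y ∈ S := memS y hy
      rw [hc] at hxy
      simp only [dif_pos hxS, dif_pos hyS] at hxy
      have := e.injective (Fin.val_injective hxy)
      exact congrArg Subtype.val this
  exact Nat.sInf_le hmem

theorem rvc_le_of_spanning_tree_leaves {V : Type*} [Fintype V] (G : SimpleGraph V)
    (hG : G.Connected) (T : SimpleGraph V) (hTG : T ≤ G) (hT : T.IsTree) (k : ℕ)
    (hk : k ≤ ({v : V | (T.neighborSet v).ncard = 1} : Set V).ncard) :
    rvc G ≤ Fintype.card V - k + 1 ∧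
    (1 ≤ k → 1 ≤ Fintype.card V - k → rvc G ≤ Fintype.card V - k) := by
  have h := rvc_le_max G hG T hTG hT k hk
  constructor
  · exact le_trans h (max_le (by omega) (by omega))
  · intro h1 h2
    exact le_trans h (by omega)
end

section
/- Let K_n ∘ K₁ be the corona of the complete graph K_n with K₁ (n ≥ 2), with pendant p_v attached to each vertex v of K_n, and let P be a set of pairs of pendants. The vertices of K_n ∘ K₁ can be colored with k colors so that every pair {p_u, p_v} ∈ P is joined by a shortest path whose internal vertices have distinct colors, if and only if the graph H on vertex set V(K_n) with edge set {uv : {p_u,p_v} ∈ P} is properly k-vertex-colorable. -/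
open SimpleGraph

/-- The corona G ∘ K₁ : each vertex (inl u) of G gets a pendant (inr u). -/
def corona {V : Type*} (G : SimpleGraph V) : SimpleGraph (V ⊕ V) :=
  SimpleGraph.fromRel (fun a b =>
    (∃ u v, a = Sum.inl u ∧ b = Sum.inl v ∧ G.Adj u v) ∨
    (∃ u, a = Sum.inl u ∧ b = Sum.inr u))


section Helpers
variable {V : Type*}

lemma corona_adj_inr_left {u : V} {x : V ⊕ V} :
    (corona (⊤ : SimpleGraph V)).Adj (Sum.inr u) x ↔ x = Sum.inl u := by
  simp only [corona, fromRel_adj]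
  constructor
  · rintro ⟨hne, h | h⟩
    · rcases h with ⟨a, b, h1, h2, _⟩ | ⟨a, h1, h2⟩ <;> simp_all
    · rcases h with ⟨a, b, h1, h2, _⟩ | ⟨a, h1, h2⟩ <;> simp_all
  · rintro rfl
    exact ⟨by simp, Or.inr (Or.inr ⟨u, rfl, rfl⟩)⟩

lemma corona_adj_inl_inl {u v : V} :
    (corona (⊤ : SimpleGraph V)).Adj (Sum.inl u) (Sum.inl v) ↔ u ≠ v := by
  simp only [corona, fromRel_adj]
  constructor
  · rintro ⟨hne, _⟩; simpa using hne
  · intro h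
    exact ⟨by simpa using h, Or.inl (Or.inl ⟨u, v, rfl, rfl, by simpa using h⟩)⟩

lemma corona_adj_inl_inr {u v : V} :
    (corona (⊤ : SimpleGraph V)).Adj (Sum.inl u) (Sum.inr v) ↔ u = v := by
  rw [adj_comm, corona_adj_inr_left]
  simp [eq_comm]

/-- canonical walk -/
def coronaWalk (u v : V) (h : u ≠ v) :
    (corona (⊤ : SimpleGraph V)).Walk (Sum.inr u) (Sum.inr v) :=
  .cons (corona_adj_inr_left.2 rfl)
    (.cons (corona_adj_inl_inl.2 h) (.cons (corona_adj_inl_inr.2 rfl) .nil))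

lemma corona_walk_length_ge {u v : V} (h : u ≠ v)
    (p : (corona (⊤ : SimpleGraph V)).Walk (Sum.inr u) (Sum.inr v)) :
    3 ≤ p.length := by
  cases p with
  | nil => exact (h rfl).elim
  | cons h1 q =>
    have ha := (corona_adj_inr_left).1 h1
    subst ha
    cases q with
    | cons h2 r =>
      rename_i b
      cases r with
      | nil =>
        exfalso
        exact h (corona_adj_inl_inr.1 h2)
      | cons h3 s =>
        simp [Walk.length_cons]

lemma corona_dist {u v : V} (h : u ≠ v) :
    (corona (⊤ : SimpleGraph V)).dist (Sum.inr u) (Sum.inr v) = 3 := by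
  have hlen : (coronaWalk u v h).length = 3 := rfl
  have hle := dist_le (coronaWalk u v h)
  rw [hlen] at hle
  have hre : (corona (⊤ : SimpleGraph V)).Reachable (Sum.inr u) (Sum.inr v) :=
    ⟨coronaWalk u v h⟩
  obtain ⟨p, hp⟩ := hre.exists_walk_length_eq_dist
  have := corona_walk_length_ge h p
  omega

end Helpers

theorem subset_srvc_iff_colorable {V : Type*} [Fintype V] [DecidableEq V]
    (hn : 2 ≤ Fintype.card V) (P : Set (Sym2 V)) (hP : ∀ e ∈ P, ¬ e.IsDiag) (k : ℕ) :
    (∃ c : V ⊕ V → ℕ, (∀ x, c x < k) ∧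
      ∀ u v : V, s(u, v) ∈ P →
        ∃ p : (corona (⊤ : SimpleGraph V)).Walk (Sum.inr u) (Sum.inr v), p.IsPath ∧
          p.length =
            (corona (⊤ : SimpleGraph V)).dist (Sum.inr u) (Sum.inr v) ∧
          (p.internals.map c).Nodup) ↔
    (∃ c : V → ℕ, (∀ v, c v < k) ∧
      ∀ u v : V, (SimpleGraph.fromEdgeSet P).Adj u v → c u ≠ c v) := by
  constructor
  · rintro ⟨c, hck, hc⟩
    refine ⟨fun v => c (Sum.inl v), fun v => hck _, ?_⟩
    intro u v huv
    rw [fromEdgeSet_adj] at huv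
    obtain ⟨hmem, hne⟩ := huv
    obtain ⟨p, hp, hlen, hnd⟩ := hc u v hmem
    rw [corona_dist hne] at hlen
    cases p with
    | nil => simp at hlen
    | cons h1 q =>
      have ha := corona_adj_inr_left.1 h1
      subst ha
      cases q with
      | cons h2 r =>
        rename_i b
        cases r with
        | cons h3 s =>
          cases s with
          | nil =>
            have hb : b = Sum.inl v := by
              have := corona_adj_inr_left.1 ((corona (⊤ : SimpleGraph V)).adj_symm h3)
              exact this
            subst hb
            simp only [Walk.internals, Walk.support_cons, Walk.support_nil,
              List.tail_cons, List.dropLast, List.map_cons, List.map_nil,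
              List.nodup_cons, List.nodup_nil, List.mem_cons, List.mem_singleton,
              List.not_mem_nil, or_false, and_true] at hnd
            simpa using hnd
          | cons h4 t =>
            simp [Walk.length_cons] at hlen
        | nil => simp [Walk.length_cons] at hlen
  · rintro ⟨c, hck, hc⟩
    refine ⟨Sum.elim c c, fun x => by cases x <;> exact hck _, ?_⟩
    intro u v hmem
    have hne : u ≠ v := by
      have := hP _ hmem
      simpa [Sym2.mk_isDiag_iff] using this
    have hcc : c u ≠ c v := hc u v (by rw [fromEdgeSet_adj]; exact ⟨hmem, hne⟩)
    refine ⟨coronaWalk u v hne, ?_, ?_, ?_⟩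
    · rw [Walk.isPath_def]
      simp [coronaWalk, hne, Ne.symm hne]
    · rw [corona_dist hne]; rfl
    · simp [coronaWalk, Walk.internals, hcc]
end
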